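/- Let 𝔅 be a bornology with closed base on a metric space X. If X has the 𝔅ˢ-Hurewicz property, then every countable open 𝔅ˢ-cover of X is 𝔅ˢ-groupable. -/

import Mathlib

open Set Metric Filter

/-- A bornology on a metric space: an ideal of subsets covering `X`. -/
structure BornologyOn (X : Type*) [MetricSpace X] where
  sets : Set (Set X)
  union_mem : ∀ {A B : Set X}, A ∈ sets → B ∈ sets → A ∪ B ∈ sets
  subset_mem : ∀ {A B : Set X}, A ∈ sets → B ⊆ A → B ∈ sets
  covers : ∀ x : X, ∃ A ∈ sets, x ∈ A

variable {X : Type*} [MetricSpace X]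

/-- `𝔅` has a closed base: a cofinal subfamily consisting of closed sets. -/
def HasClosedBase (𝔅 : BornologyOn X) : Prop :=
  ∃ base ⊆ 𝔅.sets, (∀ C ∈ base, IsClosed C) ∧ ∀ A ∈ 𝔅.sets, ∃ C ∈ base, A ⊆ C

/-- The `δ`-enlargement `B^δ = ⋃_{x ∈ B} S(x, δ)`. -/
def enlarge (B : Set X) (δ : ℝ) : Set X := ⋃ x ∈ B, ball x δ

/-- A `𝔅ˢ`-cover: `X ∉ 𝒰` and every `B ∈ 𝔅` has `B^δ ⊆ U` for some `U ∈ 𝒰`, `δ > 0`. -/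
def IsBCover (𝔅 : BornologyOn X) (𝒰 : Set (Set X)) : Prop :=
  univ ∉ 𝒰 ∧ ∀ B ∈ 𝔅.sets, ∃ U ∈ 𝒰, ∃ δ > 0, enlarge B δ ⊆ U

/-- An open `𝔅ˢ`-cover. -/
def IsOpenBCover (𝔅 : BornologyOn X) (𝒰 : Set (Set X)) : Prop :=
  (∀ U ∈ 𝒰, IsOpen U) ∧ (∀ x : X, ∃ U ∈ 𝒰, x ∈ U) ∧ IsBCover 𝔅 𝒰

/-- A `γ_{𝔅ˢ}`-cover (set form): infinite family of open sets such that for each `B ∈ 𝔅`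
all but finitely many members contain some enlargement of `B`. -/
def IsGammaBCover (𝔅 : BornologyOn X) (𝒰 : Set (Set X)) : Prop :=
  𝒰.Infinite ∧ (∀ U ∈ 𝒰, IsOpen U) ∧
    ∀ B ∈ 𝔅.sets, {U ∈ 𝒰 | ¬ ∃ δ > 0, enlarge B δ ⊆ U}.Finite

/-- A `γ_{𝔅ˢ}`-cover given as a sequence `{Uₙ}`: infinite, open, and for each `B ∈ 𝔅`
there are `n₀` and `δₙ > 0` with `B^{δₙ} ⊆ Uₙ` for all `n ≥ n₀`. -/
def IsGammaBSeq (𝔅 : BornologyOn X) (U : ℕ → Set X) : Prop :=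
  (Set.range U).Infinite ∧ (∀ n, IsOpen (U n)) ∧
    ∀ B ∈ 𝔅.sets, ∃ n₀, ∀ n ≥ n₀, ∃ δ > 0, enlarge B δ ⊆ U n

/-- A `γ`-cover: infinite family of open sets, every point in all but finitely many members. -/
def IsGammaCover (𝒰 : Set (Set X)) : Prop :=
  𝒰.Infinite ∧ (∀ U ∈ 𝒰, IsOpen U) ∧ ∀ x : X, {U ∈ 𝒰 | x ∉ U}.Finite

/-- An open cover of `X`. -/
def IsOpenCover (𝒰 : Set (Set X)) : Prop :=
  (∀ U ∈ 𝒰, IsOpen U) ∧ ∀ x : X, ∃ U ∈ 𝒰, x ∈ U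

/-- The family `𝒪_{𝔅ˢ}` of countable open `𝔅ˢ`-covers. -/
def OBs (𝔅 : BornologyOn X) : Set (Set (Set X)) :=
  {𝒰 | 𝒰.Countable ∧ IsOpenBCover 𝔅 𝒰}

/-- The family `Γ_{𝔅ˢ}` of countable `γ_{𝔅ˢ}`-covers. -/
def GBs (𝔅 : BornologyOn X) : Set (Set (Set X)) :=
  {𝒰 | 𝒰.Countable ∧ IsGammaBCover 𝔅 𝒰}

/-- The family `𝒪` of countable open covers. -/
def Ocov (X : Type*) [MetricSpace X] : Set (Set (Set X)) :=
  {𝒰 | 𝒰.Countable ∧ IsOpenCover 𝒰}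

/-- The selection principle `S₁(𝒜, ℬ)`. -/
def S1 (𝒜 ℬ : Set (Set (Set X))) : Prop :=
  ∀ 𝒰 : ℕ → Set (Set X), (∀ n, 𝒰 n ∈ 𝒜) →
    ∃ sel : ℕ → Set X, (∀ n, sel n ∈ 𝒰 n) ∧ Set.range sel ∈ ℬ

/-- The selection principle `S_fin(𝒜, ℬ)`. -/
def Sfin (𝒜 ℬ : Set (Set (Set X))) : Prop :=
  ∀ 𝒰 : ℕ → Set (Set X), (∀ n, 𝒰 n ∈ 𝒜) →
    ∃ 𝒱 : ℕ → Set (Set X), (∀ n, 𝒱 n ⊆ 𝒰 n ∧ (𝒱 n).Finite) ∧ (⋃ n, 𝒱 n) ∈ ℬ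

/-- The selection principle `U_fin(𝒜, ℬ)`. -/
def Ufin (𝒜 ℬ : Set (Set (Set X))) : Prop :=
  ∀ 𝒰 : ℕ → Set (Set X), (∀ n, 𝒰 n ∈ 𝒜) →
    ∃ 𝒱 : ℕ → Set (Set X), (∀ n, 𝒱 n ⊆ 𝒰 n ∧ (𝒱 n).Finite) ∧
      ((Set.range fun n => ⋃₀ 𝒱 n) ∈ ℬ ∨ ∃ n, ⋃₀ 𝒱 n = univ)

/-- ONE has a winning strategy in `G₁(𝒜, ℬ)`. -/
def OneWinsG1 (𝒜 ℬ : Set (Set (Set X))) : Prop :=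
  ∃ σ : List (Set X) → Set (Set X),
    (∀ h, σ h ∈ 𝒜) ∧
    ∀ play : ℕ → Set X,
      (∀ n, play n ∈ σ (List.ofFn fun i : Fin n => play i.1)) →
      Set.range play ∉ ℬ

/-- ONE has a winning strategy in `G_fin(𝒜, ℬ)`. -/
def OneWinsGfin (𝒜 ℬ : Set (Set (Set X))) : Prop :=
  ∃ σ : List (Set (Set X)) → Set (Set X),
    (∀ h, σ h ∈ 𝒜) ∧
    ∀ play : ℕ → Set (Set X),
      (∀ n, play n ⊆ σ (List.ofFn fun i : Fin n => play i.1) ∧ (play n).Finite) →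
      (⋃ n, play n) ∉ ℬ

/-- The winning condition in the `𝔅ˢ`-Hurewicz game / property: every `B ∈ 𝔅` is
eventually `δ`-enlarged into some member of `𝒱ₙ`. -/
def HurSel (𝔅 : BornologyOn X) (𝒱 : ℕ → Set (Set X)) : Prop :=
  ∀ B ∈ 𝔅.sets, ∃ n₀, ∀ n ≥ n₀, ∃ δ > 0, ∃ U ∈ 𝒱 n, enlarge B δ ⊆ U

/-- The strong `𝔅`-Hurewicz property. -/
def BsHurewicz (𝔅 : BornologyOn X) : Prop :=
  ∀ 𝒰 : ℕ → Set (Set X), (∀ n, 𝒰 n ∈ OBs 𝔅) →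
    ∃ 𝒱 : ℕ → Set (Set X), (∀ n, 𝒱 n ⊆ 𝒰 n ∧ (𝒱 n).Finite) ∧ HurSel 𝔅 𝒱

/-- ONE has a winning strategy in the `𝔅ˢ`-Hurewicz game. -/
def OneWinsHurewicz (𝔅 : BornologyOn X) : Prop :=
  ∃ σ : List (Set (Set X)) → Set (Set X),
    (∀ h, σ h ∈ OBs 𝔅) ∧
    ∀ play : ℕ → Set (Set X),
      (∀ n, play n ⊆ σ (List.ofFn fun i : Fin n => play i.1) ∧ (play n).Finite) →
      ¬ HurSel 𝔅 play

/-- A `𝔅ˢ`-groupable cover. -/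
def BsGroupable (𝔅 : BornologyOn X) (𝒰 : Set (Set X)) : Prop :=
  ∃ 𝒢 : ℕ → Set (Set X), (∀ n, (𝒢 n).Finite) ∧
    (∀ m n, m ≠ n → Disjoint (𝒢 m) (𝒢 n)) ∧ (⋃ n, 𝒢 n) = 𝒰 ∧ HurSel 𝔅 𝒢

/-- The family `𝒪_{𝔅ˢ}^{gp}` of `𝔅ˢ`-groupable open covers. -/
def OBsgp (𝔅 : BornologyOn X) : Set (Set (Set X)) :=
  {𝒰 | IsOpenCover 𝒰 ∧ BsGroupable 𝔅 𝒰}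

/-- The basic `τ_𝔅ˢ` neighbourhood `[B, ε]ˢ(f)` in `C(X)`. -/
def sball (f : C(X, ℝ)) (B : Set X) (ε : ℝ) : Set C(X, ℝ) :=
  {g | ∃ δ > 0, ∀ x ∈ enlarge B δ, |f x - g x| < ε}

/-- The topology `τ_𝔅ˢ` of strong uniform convergence on `𝔅` on `C(X)`. -/
def tauBs (𝔅 : BornologyOn X) : TopologicalSpace C(X, ℝ) :=
  TopologicalSpace.generateFrom
    {S | ∃ f : C(X, ℝ), ∃ B ∈ 𝔅.sets, ∃ ε > 0, S = sball f B ε}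

/-- Countable `T`-tightness of a topological space. -/
def CountableTTightness {Y : Type*} (t : TopologicalSpace Y) : Prop :=
  ∀ ρ : Cardinal.{0}, ρ.IsRegular → Cardinal.aleph0 < ρ →
    ∀ A : Ordinal.{0} → Set Y, (∀ α β, α ≤ β → A α ⊆ A β) →
      (∀ α, α < ρ.ord → @IsClosed _ t (A α)) →
      @IsClosed _ t (⋃ α ∈ {α | α < ρ.ord}, A α)


section Aux
variable {X : Type*} [MetricSpace X]

lemma finite_mem_sets (𝔅 : BornologyOn X) [Nonempty X] {s : Set X} (hs : s.Finite) :
    s ∈ 𝔅.sets := by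
  refine Set.Finite.induction_on (motive := fun s _ => s ∈ 𝔅.sets) s hs ?_ ?_
  · obtain ⟨A, hA, -⟩ := 𝔅.covers (Classical.arbitrary X)
    exact 𝔅.subset_mem hA (empty_subset _)
  · intro a t _ _ ih
    obtain ⟨A, hA, haA⟩ := 𝔅.covers a
    have h1 : {a} ∈ 𝔅.sets := 𝔅.subset_mem hA (singleton_subset_iff.2 haA)
    have h2 := 𝔅.union_mem h1 ih
    rw [insert_eq]
    exact h2

lemma subset_enlarge {B : Set X} {δ : ℝ} (hδ : 0 < δ) : B ⊆ enlarge B δ := by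
  intro x hx
  exact mem_biUnion hx (mem_ball_self hδ)

lemma enlarge_mono {B B' : Set X} {δ : ℝ} (h : B ⊆ B') : enlarge B δ ⊆ enlarge B' δ := by
  intro x hx
  simp only [enlarge, mem_iUnion] at hx ⊢
  obtain ⟨y, hy, hxy⟩ := hx
  exact ⟨y, h hy, hxy⟩

/-- Removing finitely many members from a countable open `𝔅ˢ`-cover keeps it a
`𝔅ˢ`-cover in the key sense. -/
lemma remove_finite (𝔅 : BornologyOn X) [Nonempty X] {𝒰 F : Set (Set X)}
    (h𝒰 : 𝒰 ∈ OBs 𝔅) (hF : F.Finite) :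
    ∀ B ∈ 𝔅.sets, ∃ U ∈ 𝒰 \ F, ∃ δ > 0, enlarge B δ ⊆ U := by
  classical
  set p : Set X → X := fun V => if h : ∃ x, x ∉ V then h.choose else Classical.arbitrary X
    with hp
  have hpspec : ∀ V : Set X, V ≠ univ → p V ∉ V := by
    intro V hV
    have h : ∃ x, x ∉ V := by
      by_contra hc
      push_neg at hc
      exact hV (eq_univ_of_forall hc)
    simp only [hp, dif_pos h]
    exact h.choose_spec
  set P : Set X := p '' {V ∈ F | V ≠ univ} with hP
  have hPfin : P.Finite := (hF.subset (sep_subset _ _)).image _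
  intro B hB
  have hB' : B ∪ P ∈ 𝔅.sets := 𝔅.union_mem hB (finite_mem_sets 𝔅 hPfin)
  obtain ⟨U, hU𝒰, δ, hδ, hsub⟩ := h𝒰.2.2.2.2 _ hB'
  refine ⟨U, ⟨hU𝒰, ?_⟩, δ, hδ, (enlarge_mono subset_union_left).trans hsub⟩
  intro hUF
  have hUuniv : U ≠ univ := fun hc => h𝒰.2.2.2.1 (hc ▸ hU𝒰)
  have hpU : p U ∈ P := ⟨U, ⟨hUF, hUuniv⟩, rfl⟩
  exact hpspec U hUuniv (hsub (subset_enlarge hδ (Or.inr hpU)))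

lemma OBs_infinite (𝔅 : BornologyOn X) [Nonempty X] {𝒰 : Set (Set X)}
    (h𝒰 : 𝒰 ∈ OBs 𝔅) : 𝒰.Infinite := by
  intro hfin
  obtain ⟨A, hA, -⟩ := 𝔅.covers (Classical.arbitrary X)
  obtain ⟨U, hU, -⟩ := remove_finite 𝔅 h𝒰 hfin A hA
  exact hU.2 hU.1

end Aux

theorem stmt15 (𝔅 : BornologyOn X) (hcb : HasClosedBase 𝔅)
    (h : BsHurewicz 𝔅) : ∀ 𝒰 ∈ OBs 𝔅, BsGroupable 𝔅 𝒰 := by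
  classical
  intro 𝒰 h𝒰
  rcases isEmpty_or_nonempty X with hX | hX
  · -- Degenerate case: `X` is empty, so `𝒰 = ∅`.
    have h𝒰e : 𝒰 = ∅ := by
      ext U
      simp only [mem_empty_iff_false, iff_false]
      intro hU
      have hU2 : U = univ := by
        ext x
        exact (IsEmpty.false x).elim
      exact h𝒰.2.2.2.1 (hU2 ▸ hU)
    refine ⟨fun _ => ∅, fun _ => finite_empty, fun _ _ _ => by simp, by simp [h𝒰e], ?_⟩
    intro B hB
    obtain ⟨U, hU, -⟩ := h𝒰.2.2.2.2 B hB
    rw [h𝒰e] at hU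
    exact absurd hU (notMem_empty U)
  -- Main case.
  have hinf : 𝒰.Infinite := OBs_infinite 𝔅 h𝒰
  obtain ⟨u, huinj, hurange⟩ : ∃ u : ℕ → Set X, Function.Injective u ∧ range u = 𝒰 := by
    haveI := h𝒰.1.to_subtype
    haveI := hinf.to_subtype
    obtain ⟨e⟩ := nonempty_equiv_of_countable (α := ℕ) (β := ↥𝒰)
    refine ⟨fun n => ((e n : ↥𝒰) : Set X), Subtype.coe_injective.comp e.injective, ?_⟩
    have : (fun n => ((e n : ↥𝒰) : Set X)) = (Subtype.val) ∘ e := rfl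
    rw [this, Set.range_comp, e.surjective.range_eq, Set.image_univ, Subtype.range_coe]
  -- Tails are still `𝔅ˢ`-covers in the key sense.
  have htail : ∀ n, ∀ B ∈ 𝔅.sets, ∃ U ∈ u '' Ici n, ∃ δ > 0, enlarge B δ ⊆ U := by
    intro n B hB
    obtain ⟨U, ⟨hU1, hU2⟩, δ, hδ, hsub⟩ :=
      remove_finite 𝔅 h𝒰 ((Set.finite_Iio n).image u) B hB
    obtain ⟨j, hj⟩ : ∃ j, u j = U := by
      rw [← hurange] at hU1; exact hU1
    have hjn : n ≤ j := by
      by_contra hc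
      push_neg at hc
      exact hU2 ⟨j, hc, hj⟩
    exact ⟨U, ⟨j, hjn, hj⟩, δ, hδ, hsub⟩
  -- Tails are countable open `𝔅ˢ`-covers.
  have htOBs : ∀ n, u '' Ici n ∈ OBs 𝔅 := by
    intro n
    have hsub𝒰 : u '' Ici n ⊆ 𝒰 := by
      rw [← hurange]; exact image_subset_range u _
    refine ⟨(Set.to_countable _).image u, fun U hU => h𝒰.2.1 U (hsub𝒰 hU), ?_, ?_, htail n⟩
    · intro x
      obtain ⟨A, hA, hxA⟩ := 𝔅.covers x
      obtain ⟨U, hU, δ, hδ, hs⟩ := htail n A hA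
      exact ⟨U, hU, hs (subset_enlarge hδ hxA)⟩
    · intro hc
      exact h𝒰.2.2.2.1 (hsub𝒰 hc)
  -- Apply the Hurewicz property to the tails.
  obtain ⟨𝒱, h𝒱, hHS⟩ := h (fun n => u '' Ici n) htOBs
  -- Each selection is contained in a finite block of the enumeration.
  have hbound : ∀ n, ∃ M, n < M ∧ 𝒱 n ⊆ u '' Ico n M := by
    intro n
    have hJ : (u ⁻¹' (𝒱 n)).Finite := (h𝒱 n).2.preimage (huinj.injOn)
    obtain ⟨b, hb⟩ := hJ.bddAbove
    refine ⟨max (n + 1) (b + 1), lt_of_lt_of_le (Nat.lt_succ_self n) (le_max_left _ _), ?_⟩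
    intro V hV
    obtain ⟨j, hjn, hj⟩ := (h𝒱 n).1 hV
    have hjJ : j ∈ u ⁻¹' (𝒱 n) := by
      simp only [mem_preimage, hj]; exact hV
    have := hb hjJ
    exact ⟨j, ⟨hjn, by omega⟩, hj⟩
  choose f hf1 hf2 using hbound
  obtain ⟨m, hm0, hmsucc⟩ : ∃ m : ℕ → ℕ, m 0 = 0 ∧ ∀ k, m (k + 1) = f (m k) :=
    ⟨fun k => Nat.rec 0 (fun _ x => f x) k, rfl, fun _ => rfl⟩
  have hm : StrictMono m := strictMono_nat_of_lt_succ fun k => by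
    rw [hmsucc]; exact hf1 (m k)
  refine ⟨fun k => u '' Ico (m k) (m (k + 1)), fun k => (Set.finite_Ico _ _).image u,
    ?_, ?_, ?_⟩
  · -- pairwise disjoint
    intro k l hkl
    refine Set.disjoint_image_of_injective huinj ?_
    rw [Set.disjoint_left]
    intro j hj1 hj2
    simp only [mem_Ico] at hj1 hj2
    rcases hkl.lt_or_gt with hlt | hlt
    · have := hm.monotone (show k + 1 ≤ l from hlt)
      omega
    · have := hm.monotone (show l + 1 ≤ k from hlt)
      omega
  · -- union is `𝒰`
    have hcov : ∀ j : ℕ, ∃ k, j ∈ Ico (m k) (m (k + 1)) := by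
      intro j
      have hex : ∃ k, j < m k := ⟨j + 1, lt_of_lt_of_le (Nat.lt_succ_self j) hm.le_apply⟩
      have hfind := Nat.find_spec hex
      have hne : Nat.find hex ≠ 0 := by
        intro hc
        rw [hc, hm0] at hfind
        omega
      have hmin : ¬ j < m (Nat.find hex - 1) := Nat.find_min hex (by omega)
      refine ⟨Nat.find hex - 1, ?_⟩
      have : Nat.find hex - 1 + 1 = Nat.find hex := by omega
      rw [mem_Ico, this]
      omega
    ext V
    simp only [mem_iUnion]
    constructor
    · rintro ⟨k, j, -, rfl⟩
      rw [← hurange]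
      exact mem_range_self j
    · intro hV
      rw [← hurange] at hV
      obtain ⟨j, rfl⟩ := hV
      obtain ⟨k, hk⟩ := hcov j
      exact ⟨k, j, hk, rfl⟩
  · -- HurSel
    intro B hB
    obtain ⟨n₀, hn₀⟩ := hHS B hB
    refine ⟨n₀, fun k hk => ?_⟩
    have hmk : n₀ ≤ m k := le_trans hk hm.le_apply
    obtain ⟨δ, hδ, U, hU, hsub⟩ := hn₀ (m k) hmk
    refine ⟨δ, hδ, U, ?_, hsub⟩
    have h3 := hf2 (m k) hU
    show U ∈ u '' Ico (m k) (m (k + 1))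
    rw [hmsucc]
    exact h3
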